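/- Let Λ be a row-finite k-graph and let x, y ∈ Λ^∞. Then x is frequently divertable to [y] if and only if x belongs to the closure of [y] in the cylinder topology on Λ^∞. -/

import Mathlib

/-- A `k`-graph: a countable small category (objects being identified with their
identity morphisms, so that the morphism set `M` carries everything) together with a
degree functor `d : Λ → ℕ^k` satisfying the unique factorisation property. -/
structure KGraph (k : ℕ) : Type 1 where
  M : Type
  countableM : Countable M
  rng : M → M
  src : M → M
  comp : M → M → M
  d : M → Fin k → ℕ
  src_src : ∀ a, src (src a) = src a
  rng_src : ∀ a, rng (src a) = src a
  src_rng : ∀ a, src (rng a) = rng a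
  rng_rng : ∀ a, rng (rng a) = rng a
  comp_src_self : ∀ a, comp a (src a) = a
  rng_comp_self : ∀ a, comp (rng a) a = a
  rng_comp : ∀ a b, src a = rng b → rng (comp a b) = rng a
  src_comp : ∀ a b, src a = rng b → src (comp a b) = src b
  comp_assoc : ∀ a b c, src a = rng b → src b = rng c →
    comp (comp a b) c = comp a (comp b c)
  d_src : ∀ a, d (src a) = 0
  d_comp : ∀ a b, src a = rng b → d (comp a b) = d a + d b
  factor : ∀ a (m n : Fin k → ℕ), d a = m + n →
    ∃! p : M × M, src p.1 = rng p.2 ∧ comp p.1 p.2 = a ∧ d p.1 = m ∧ d p.2 = n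

namespace KGraph

variable {k : ℕ}

/-- The objects of `Λ`, identified with the identity morphisms. -/
def IsObj (Λ : KGraph k) (v : Λ.M) : Prop := Λ.rng v = v

/-- `Λ` is row-finite: each `vΛ^m` is finite. -/
def RowFinite (Λ : KGraph k) : Prop :=
  ∀ v, Λ.IsObj v → ∀ m : Fin k → ℕ, {a : Λ.M | Λ.rng a = v ∧ Λ.d a = m}.Finite

/-- `Λ` has no sources: each `vΛ^m` is nonempty. -/
def NoSources (Λ : KGraph k) : Prop :=
  ∀ v, Λ.IsObj v → ∀ m : Fin k → ℕ, ∃ a : Λ.M, Λ.rng a = v ∧ Λ.d a = m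

end KGraph

/-- An infinite path of a `k`-graph `Λ`: a degree-preserving functor `x : Ω_k → Λ`,
recorded by its values `seg m n _ = x(m, n)` on the morphisms `(m, n)` (for `m ≤ n`)
of `Ω_k`; the vertex `x(m)` is `seg m m _`. -/
structure InfPath {k : ℕ} (Λ : KGraph k) where
  seg : ∀ m n : Fin k → ℕ, m ≤ n → Λ.M
  d_seg : ∀ m n (h : m ≤ n), Λ.d (seg m n h) = n - m
  rng_seg : ∀ m n (h : m ≤ n), Λ.rng (seg m n h) = seg m m le_rfl
  src_seg : ∀ m n (h : m ≤ n), Λ.src (seg m n h) = seg n n le_rfl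
  comp_seg : ∀ m n p (h1 : m ≤ n) (h2 : n ≤ p),
    Λ.comp (seg m n h1) (seg n p h2) = seg m p (h1.trans h2)

namespace InfPath

variable {k : ℕ} {Λ : KGraph k}

/-- The vertex `x(n)` of an infinite path `x`. -/
def vert (x : InfPath Λ) (n : Fin k → ℕ) : Λ.M := x.seg n n le_rfl

/-- The shift `σ^p(x)`, given by `σ^p(x)(m, n) = x(m + p, n + p)`. -/
def shift (x : InfPath Λ) (p : Fin k → ℕ) : InfPath Λ where
  seg m n h := x.seg (m + p) (n + p) (add_le_add h le_rfl)
  d_seg m n h := by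
    rw [x.d_seg]
    funext i
    simp only [Pi.sub_apply, Pi.add_apply]
    omega
  rng_seg m n h := x.rng_seg _ _ _
  src_seg m n h := x.src_seg _ _ _
  comp_seg m n p' h1 h2 := x.comp_seg _ _ _ _ _

/-- `x` is shift equivalent to `y` with lag `n ∈ ℤ^k`: there are `p, q ∈ ℕ^k` with
`p - q = n` and `σ^p(x) = σ^q(y)`. -/
def ShiftEquivLag (x y : InfPath Λ) (n : Fin k → ℤ) : Prop :=
  ∃ p q : Fin k → ℕ, (fun i => (p i : ℤ) - (q i : ℤ)) = n ∧ x.shift p = y.shift q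

/-- `x` is shift equivalent to `y`. -/
def ShiftEquiv (x y : InfPath Λ) : Prop := ∃ n : Fin k → ℤ, ShiftEquivLag x y n

/-- `x` is frequently divertable to `[y]`: for every `n ∈ ℕ^k` there is a path in
`x(n)Λ^∞` which is shift equivalent to `y`. -/
def FreqDiv (x y : InfPath Λ) : Prop :=
  ∀ n : Fin k → ℕ, ∃ z : InfPath Λ, z.vert 0 = x.vert n ∧ ShiftEquiv z y

/-- The cylinder topology on `Λ^∞`, generated by the cylinder sets
`Z(α) = {x : x(0, d(α)) = α}` for morphisms `α` of `Λ`. -/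
instance : TopologicalSpace (InfPath Λ) :=
  TopologicalSpace.generateFrom
    {S | ∃ a : Λ.M, S = {x : InfPath Λ | x.seg 0 (Λ.d a) zero_le = a}}

end InfPath

section Aux

variable {k : ℕ} {Λ : KGraph k}

theorem factor_uniq (Λ : KGraph k) {a : Λ.M} {m n : Fin k → ℕ} (hd : Λ.d a = m + n)
    {b1 b2 c1 c2 : Λ.M}
    (hb1 : Λ.src b1 = Λ.rng b2) (hb2 : Λ.comp b1 b2 = a) (hb3 : Λ.d b1 = m) (hb4 : Λ.d b2 = n)
    (hc1 : Λ.src c1 = Λ.rng c2) (hc2 : Λ.comp c1 c2 = a) (hc3 : Λ.d c1 = m) (hc4 : Λ.d c2 = n) :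
    b1 = c1 ∧ b2 = c2 := by
  obtain ⟨p, -, hu⟩ := Λ.factor a m n hd
  have e1 := hu (b1, b2) ⟨hb1, hb2, hb3, hb4⟩
  have e2 := hu (c1, c2) ⟨hc1, hc2, hc3, hc4⟩
  exact ⟨congrArg Prod.fst (e1.trans e2.symm), congrArg Prod.snd (e1.trans e2.symm)⟩

namespace InfPath

theorem ext' {x y : InfPath Λ}
    (h : ∀ m n (hmn : m ≤ n), x.seg m n hmn = y.seg m n hmn) : x = y := by
  obtain ⟨s1, _, _, _, _⟩ := x
  obtain ⟨s2, _, _, _, _⟩ := y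
  have : s1 = s2 := by funext m n hmn; exact h m n hmn
  subst this
  rfl

theorem seg_congr (x : InfPath Λ) {m n m' n' : Fin k → ℕ} (hm : m = m') (hn : n = n')
    (h : m ≤ n) : x.seg m n h = x.seg m' n' (hm ▸ hn ▸ h) := by
  subst hm; subst hn; rfl

theorem shift_shift (x : InfPath Λ) (a b : Fin k → ℕ) :
    (x.shift a).shift b = x.shift (b + a) := by
  apply ext'; intro m n h
  show x.seg (m + b + a) (n + b + a) _ = x.seg (m + (b + a)) (n + (b + a)) _
  exact x.seg_congr (add_assoc ..) (add_assoc ..) _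

theorem shift_zero (x : InfPath Λ) : x.shift 0 = x := by
  apply ext'; intro m n h
  show x.seg (m + 0) (n + 0) _ = x.seg m n h
  exact x.seg_congr (add_zero m) (add_zero n) _

theorem ShiftEquiv.trans {w z y : InfPath Λ} (h1 : ShiftEquiv w z) (h2 : ShiftEquiv z y) :
    ShiftEquiv w y := by
  obtain ⟨_, p, q, -, h1⟩ := h1
  obtain ⟨_, p', q', -, h2⟩ := h2
  refine ⟨_, p' + p, q + q', rfl, ?_⟩
  calc w.shift (p' + p) = (w.shift p).shift p' := (shift_shift ..).symm
  _ = (z.shift q).shift p' := by rw [h1]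
  _ = z.shift (p' + q) := shift_shift ..
  _ = z.shift (q + p') := by rw [add_comm]
  _ = (z.shift p').shift q := (shift_shift ..).symm
  _ = (y.shift q').shift q := by rw [h2]
  _ = y.shift (q + q') := shift_shift ..

theorem shiftEquiv_shift (z : InfPath Λ) (n : Fin k → ℕ) : ShiftEquiv (z.shift n) z :=
  ⟨_, 0, n, rfl, by rw [shift_shift, zero_add]⟩

theorem seg_prefix {x z : InfPath Λ} {m n : Fin k → ℕ} (hmn : m ≤ n)
    (h : z.seg 0 n zero_le = x.seg 0 n zero_le) :
    z.seg 0 m zero_le = x.seg 0 m zero_le := by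
  have hd : Λ.d (x.seg 0 n zero_le) = m + (n - m) := by
    rw [x.d_seg]; funext i
    simp only [Pi.sub_apply, Pi.add_apply, Pi.zero_apply]
    have : m i ≤ n i := hmn i; omega
  refine (factor_uniq Λ (b2 := z.seg m n hmn) (c2 := x.seg m n hmn) hd ?_ ?_ ?_ ?_ ?_ ?_ ?_ ?_).1
  · rw [z.src_seg, z.rng_seg]
  · rw [z.comp_seg]; exact h
  · rw [z.d_seg, tsub_zero]
  · exact z.d_seg _ _ _
  · rw [x.src_seg, x.rng_seg]
  · rw [x.comp_seg]
  · rw [x.d_seg, tsub_zero]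
  · exact x.d_seg _ _ _

end InfPath

/-- A coherent family of initial segments, from which an infinite path can be built. -/
structure Fam (Λ : KGraph k) where
  c : (Fin k → ℕ) → Λ.M
  d_c : ∀ q, Λ.d (c q) = q
  ext : ∀ q q', q ≤ q' →
    ∃ b, Λ.src (c q) = Λ.rng b ∧ Λ.comp (c q) b = c q' ∧ Λ.d b = q' - q

namespace Fam

variable (F : Fam Λ)

noncomputable def mid (q q' : Fin k → ℕ) (h : q ≤ q') : Λ.M := (F.ext q q' h).choose

theorem mid_spec (q q' : Fin k → ℕ) (h : q ≤ q') :
    Λ.src (F.c q) = Λ.rng (F.mid q q' h) ∧ Λ.comp (F.c q) (F.mid q q' h) = F.c q' ∧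
      Λ.d (F.mid q q' h) = q' - q := (F.ext q q' h).choose_spec

theorem mid_uniq {q q' : Fin k → ℕ} (h : q ≤ q') {b : Λ.M}
    (h1 : Λ.src (F.c q) = Λ.rng b) (h2 : Λ.comp (F.c q) b = F.c q')
    (h3 : Λ.d b = q' - q) : b = F.mid q q' h := by
  have hd : Λ.d (F.c q') = q + (q' - q) := by
    rw [F.d_c]; funext i
    have : q i ≤ q' i := h i
    simp only [Pi.add_apply, Pi.sub_apply]; omega
  exact (factor_uniq Λ hd h1 h2 (F.d_c q) h3 (F.mid_spec q q' h).1 (F.mid_spec q q' h).2.1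
    (F.d_c q) (F.mid_spec q q' h).2.2).2

theorem mid_self (q : Fin k → ℕ) : F.mid q q le_rfl = Λ.src (F.c q) := by
  refine (F.mid_uniq le_rfl (Λ.rng_src _).symm (Λ.comp_src_self _) ?_).symm
  rw [Λ.d_src, tsub_self]

theorem src_mid (q q' : Fin k → ℕ) (h : q ≤ q') :
    Λ.src (F.mid q q' h) = Λ.src (F.c q') := by
  rw [← (F.mid_spec q q' h).2.1, Λ.src_comp _ _ (F.mid_spec q q' h).1]

noncomputable def path : InfPath Λ where
  seg m n h := F.mid m n h
  d_seg m n h := (F.mid_spec m n h).2.2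
  rng_seg m n h := by
    rw [← (F.mid_spec m n h).1]
    exact (F.mid_self m).symm
  src_seg m n h := by
    rw [F.src_mid, ← F.mid_self]
  comp_seg m n p h1 h2 := by
    have s1 := F.mid_spec m n h1
    have s2 := F.mid_spec n p h2
    have hmv : Λ.src (F.mid m n h1) = Λ.rng (F.mid n p h2) := by
      rw [F.src_mid]; exact s2.1
    apply F.mid_uniq (h1.trans h2)
    · rw [Λ.rng_comp _ _ hmv]; exact s1.1
    · rw [← Λ.comp_assoc _ _ _ s1.1 hmv, s1.2.1, s2.2.1]
    · rw [Λ.d_comp _ _ hmv, s1.2.2, s2.2.2]; funext i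
      have a : m i ≤ n i := h1 i; have b : n i ≤ p i := h2 i
      simp only [Pi.add_apply, Pi.sub_apply]; omega

end Fam

open InfPath in
/-- Concatenation: a finite initial piece `x(0, n)` of `x` can be prepended to any
infinite path `z` starting at the vertex `x(n)`. -/
theorem concat (x z : InfPath Λ) (n : Fin k → ℕ) (hz : z.vert 0 = x.vert n) :
    ∃ w : InfPath Λ, w.seg 0 n zero_le = x.seg 0 n zero_le ∧ w.shift n = z := by
  classical
  set A := x.seg 0 n zero_le with hA
  have hsA : Λ.src A = z.vert 0 := by rw [hA, x.src_seg]; exact hz.symm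
  set r : (Fin k → ℕ) → (Fin k → ℕ) := fun q => (q ⊔ n) - n with hrdef
  set W : (Fin k → ℕ) → Λ.M := fun q => Λ.comp A (z.seg 0 (r q) zero_le) with hWdef
  have hsrc : ∀ q, Λ.src A = Λ.rng (z.seg 0 (r q) zero_le) := fun q => by
    rw [z.rng_seg]; exact hsA
  have hdW : ∀ q, Λ.d (W q) = q + ((q ⊔ n) - q) := by
    intro q
    show Λ.d (Λ.comp A _) = _
    rw [Λ.d_comp _ _ (hsrc q), x.d_seg, z.d_seg]
    funext i
    simp only [hrdef, Pi.add_apply, Pi.sub_apply, Pi.sup_apply, Pi.zero_apply]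
    rcases le_total (q i) (n i) with h | h
    · rw [max_eq_right h]; omega
    · rw [max_eq_left h]; omega
  have cat : ∀ q, ∃! p : Λ.M × Λ.M,
      Λ.src p.1 = Λ.rng p.2 ∧ Λ.comp p.1 p.2 = W q ∧ Λ.d p.1 = q ∧ Λ.d p.2 = (q ⊔ n) - q :=
    fun q => Λ.factor (W q) q _ (hdW q)
  set c : (Fin k → ℕ) → Λ.M := fun q => ((cat q).exists.choose).1 with hcdef
  set e : (Fin k → ℕ) → Λ.M := fun q => ((cat q).exists.choose).2 with hedef
  have cspec : ∀ q, Λ.src (c q) = Λ.rng (e q) ∧ Λ.comp (c q) (e q) = W q ∧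
      Λ.d (c q) = q ∧ Λ.d (e q) = (q ⊔ n) - q := fun q => (cat q).exists.choose_spec
  have cuniq : ∀ q (p1 p2 : Λ.M), Λ.src p1 = Λ.rng p2 → Λ.comp p1 p2 = W q → Λ.d p1 = q →
      Λ.d p2 = (q ⊔ n) - q → p1 = c q ∧ p2 = e q := by
    intro q p1 p2 h1 h2 h3 h4
    have heq := (cat q).unique (y₁ := (p1, p2)) (y₂ := (cat q).exists.choose)
      ⟨h1, h2, h3, h4⟩ (cspec q)
    exact ⟨congrArg Prod.fst heq, congrArg Prod.snd heq⟩
  -- value of `c` at indices of the form `m + n`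
  have hc_add : ∀ m : Fin k → ℕ, c (m + n) = Λ.comp A (z.seg 0 m zero_le) := by
    intro m
    have hr : r (m + n) = m := by
      funext i
      simp only [hrdef, Pi.sub_apply, Pi.sup_apply, Pi.add_apply]
      rw [max_eq_left (Nat.le_add_left _ _)]; omega
    have hAm : Λ.src A = Λ.rng (z.seg 0 m zero_le) := by rw [z.rng_seg]; exact hsA
    have hW : W (m + n) = Λ.comp A (z.seg 0 m zero_le) := by
      show Λ.comp A (z.seg 0 (r (m + n)) zero_le) = _
      congr 1
      exact z.seg_congr rfl hr _
    have hdC : Λ.d (Λ.comp A (z.seg 0 m zero_le)) = m + n := by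
      rw [Λ.d_comp _ _ hAm, x.d_seg, z.d_seg]
      funext i; simp only [Pi.add_apply, Pi.sub_apply, Pi.zero_apply]; omega
    refine ((cuniq (m + n) _ (Λ.src (Λ.comp A (z.seg 0 m zero_le))) ?_ ?_ hdC ?_).1).symm
    · rw [Λ.rng_src]
    · rw [Λ.comp_src_self]; exact hW.symm
    · rw [Λ.d_src]; funext i
      simp only [Pi.sub_apply, Pi.sup_apply, Pi.add_apply, Pi.zero_apply]
      rw [max_eq_left (Nat.le_add_left _ _)]; omega
  have hc0 : c 0 = Λ.rng A := by
    have hr : r 0 = 0 := by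
      funext i
      simp only [hrdef, Pi.sub_apply, Pi.sup_apply, Pi.zero_apply]
      rw [max_eq_right (Nat.zero_le _)]; omega
    have hW : W 0 = A := by
      show Λ.comp A (z.seg 0 (r 0) zero_le) = A
      have h1 : z.seg 0 (r 0) zero_le = z.vert 0 := z.seg_congr rfl hr _
      rw [h1, ← hsA, Λ.comp_src_self]
    have hdr : Λ.d (Λ.rng A) = 0 := by rw [← Λ.src_rng A]; exact Λ.d_src _
    refine ((cuniq 0 (Λ.rng A) A ?_ ?_ hdr ?_).1).symm
    · rw [Λ.src_rng]
    · rw [Λ.rng_comp_self]; exact hW.symm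
    · rw [x.d_seg]; funext i
      simp only [Pi.sub_apply, Pi.sup_apply, Pi.zero_apply]
      rw [max_eq_right (Nat.zero_le _)]
  have hcn : c n = A := by
    have hr : r n = 0 := by
      funext i
      simp only [hrdef, Pi.sub_apply, Pi.sup_apply, Pi.zero_apply, max_self]; omega
    have hW : W n = A := by
      show Λ.comp A (z.seg 0 (r n) zero_le) = A
      have h1 : z.seg 0 (r n) zero_le = z.vert 0 := z.seg_congr rfl hr _
      rw [h1, ← hsA, Λ.comp_src_self]
    refine ((cuniq n A (Λ.src A) ?_ ?_ ?_ ?_).1).symm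
    · rw [Λ.rng_src]
    · rw [Λ.comp_src_self]; exact hW.symm
    · rw [x.d_seg, tsub_zero]
    · rw [Λ.d_src]; funext i
      simp only [Pi.sub_apply, Pi.sup_apply, Pi.zero_apply, max_self]; omega
  -- the family is coherent
  have hext : ∀ q q', q ≤ q' → ∃ b, Λ.src (c q) = Λ.rng b ∧ Λ.comp (c q) b = c q' ∧
      Λ.d b = q' - q := by
    intro q q' hqq'
    have hle : ∀ i, q i ≤ q' i := fun i => hqq' i
    have hrle : r q ≤ r q' := by
      rw [Pi.le_def]; intro i
      simp only [hrdef, Pi.sub_apply, Pi.sup_apply]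
      exact Nat.sub_le_sub_right (max_le_max (hle i) le_rfl) _
    set g := z.seg (r q) (r q') hrle with hg
    have hzr : Λ.src (z.seg 0 (r q) zero_le) = Λ.rng g := by
      rw [z.src_seg, hg, z.rng_seg]
    have hWstep : W q' = Λ.comp (W q) g := by
      show Λ.comp A (z.seg 0 (r q') zero_le) =
        Λ.comp (Λ.comp A (z.seg 0 (r q) zero_le)) g
      rw [Λ.comp_assoc _ _ _ (hsrc q) hzr, hg, z.comp_seg]
    have hd' : Λ.d (c q') = q + (q' - q) := by
      rw [(cspec q').2.2.1]; funext i
      simp only [Pi.add_apply, Pi.sub_apply]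
      have := hle i; omega
    obtain ⟨⟨u, v⟩, ⟨su, cu, du, dv⟩, -⟩ := Λ.factor (c q') q (q' - q) hd'
    have hsv : Λ.src v = Λ.rng (e q') := by
      have h1 : Λ.src v = Λ.src (c q') := by rw [← cu, Λ.src_comp _ _ su]
      rw [h1]; exact (cspec q').1
    have hseq : Λ.src (e q) = Λ.rng g := by
      have h1 : Λ.src (e q) = Λ.src (W q) := by
        rw [← (cspec q).2.1, Λ.src_comp _ _ (cspec q).1]
      have h2 : Λ.src (W q) = Λ.src (z.seg 0 (r q) zero_le) := Λ.src_comp _ _ (hsrc q)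
      rw [h1, h2]; exact hzr
    have hdWq' : Λ.d (W q') = q + ((q' ⊔ n) - q) := by
      rw [hdW q']; funext i
      simp only [Pi.add_apply, Pi.sub_apply, Pi.sup_apply]
      have h1 := hle i
      have h2 : q' i ≤ max (q' i) (n i) := le_max_left _ _
      omega
    have b1c : Λ.src u = Λ.rng (Λ.comp v (e q')) := by rw [Λ.rng_comp _ _ hsv]; exact su
    have b2c : Λ.comp u (Λ.comp v (e q')) = W q' := by
      rw [← Λ.comp_assoc _ _ _ su hsv, cu]; exact (cspec q').2.1
    have b4c : Λ.d (Λ.comp v (e q')) = (q' ⊔ n) - q := by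
      rw [Λ.d_comp _ _ hsv, dv, (cspec q').2.2.2]; funext i
      simp only [Pi.add_apply, Pi.sub_apply, Pi.sup_apply]
      have h1 := hle i
      have h2 : q' i ≤ max (q' i) (n i) := le_max_left _ _
      omega
    have c1c : Λ.src (c q) = Λ.rng (Λ.comp (e q) g) := by
      rw [Λ.rng_comp _ _ hseq]; exact (cspec q).1
    have c2c : Λ.comp (c q) (Λ.comp (e q) g) = W q' := by
      rw [← Λ.comp_assoc _ _ _ (cspec q).1 hseq, (cspec q).2.1]; exact hWstep.symm
    have c4c : Λ.d (Λ.comp (e q) g) = (q' ⊔ n) - q := by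
      rw [Λ.d_comp _ _ hseq, (cspec q).2.2.2, hg, z.d_seg]; funext i
      simp only [hrdef, Pi.add_apply, Pi.sub_apply, Pi.sup_apply]
      have h1 := hle i
      have h2 : q i ≤ max (q i) (n i) := le_max_left _ _
      have h3 : n i ≤ max (q i) (n i) := le_max_right _ _
      have h4 : max (q i) (n i) ≤ max (q' i) (n i) := max_le_max h1 le_rfl
      have h5 : n i ≤ max (q' i) (n i) := le_max_right _ _
      omega
    have hu : u = c q :=
      (factor_uniq Λ hdWq' b1c b2c du b4c c1c c2c (cspec q).2.2.1 c4c).1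
    exact ⟨v, by rw [← hu]; exact su, by rw [← hu]; exact cu, dv⟩
  set F : Fam Λ := ⟨c, fun q => (cspec q).2.2.1, hext⟩ with hF
  refine ⟨F.path, ?_, ?_⟩
  · show F.mid 0 n zero_le = A
    refine (F.mid_uniq (zero_le : 0 ≤ n) (b := A) ?_ ?_ ?_).symm
    · show Λ.src (c 0) = Λ.rng A
      rw [hc0, Λ.src_rng]
    · show Λ.comp (c 0) A = c n
      rw [hc0, Λ.rng_comp_self, hcn]
    · exact x.d_seg 0 n _
  · apply InfPath.ext'
    intro m m' h
    show F.mid (m + n) (m' + n) (add_le_add h le_rfl) = z.seg m m' h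
    refine (F.mid_uniq (add_le_add h le_rfl) (b := z.seg m m' h) ?_ ?_ ?_).symm
    · show Λ.src (c (m + n)) = Λ.rng (z.seg m m' h)
      have hAm : Λ.src A = Λ.rng (z.seg 0 m zero_le) := by rw [z.rng_seg]; exact hsA
      rw [hc_add m, Λ.src_comp _ _ hAm, z.src_seg, z.rng_seg]
    · show Λ.comp (c (m + n)) (z.seg m m' h) = c (m' + n)
      have hAm : Λ.src A = Λ.rng (z.seg 0 m zero_le) := by rw [z.rng_seg]; exact hsA
      have h2 : Λ.src (z.seg 0 m zero_le) = Λ.rng (z.seg m m' h) := by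
        rw [z.src_seg, z.rng_seg]
      rw [hc_add m, hc_add m', Λ.comp_assoc _ _ _ hAm h2, z.comp_seg]
    · rw [z.d_seg]; funext i
      simp only [Pi.sub_apply, Pi.add_apply]; omega

open InfPath in
theorem open_key {x : InfPath Λ} {U : Set (InfPath Λ)}
    (hU : TopologicalSpace.GenerateOpen
      {S | ∃ a : Λ.M, S = {w : InfPath Λ | w.seg 0 (Λ.d a) zero_le = a}} U) :
    x ∈ U → ∃ n : Fin k → ℕ, ∀ z : InfPath Λ,
      z.seg 0 n zero_le = x.seg 0 n zero_le → z ∈ U := by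
  induction hU with
  | basic S hS =>
    obtain ⟨a, rfl⟩ := hS
    intro hx
    exact ⟨Λ.d a, fun z hzx => hzx.trans hx⟩
  | univ => exact fun _ => ⟨0, fun _ _ => trivial⟩
  | inter U V hU hV ihU ihV =>
    intro hx
    obtain ⟨n1, h1⟩ := ihU hx.1
    obtain ⟨n2, h2⟩ := ihV hx.2
    exact ⟨n1 ⊔ n2, fun z hz =>
      ⟨h1 z (seg_prefix le_sup_left hz), h2 z (seg_prefix le_sup_right hz)⟩⟩
  | sUnion S hS ih =>
    intro hx
    obtain ⟨T, hT, hxT⟩ := hx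
    obtain ⟨n, hn⟩ := ih T hT hxT
    exact ⟨n, fun z hz => ⟨T, hT, hn z hz⟩⟩

end Aux

/-- For a row-finite `k`-graph `Λ` and `x, y ∈ Λ^∞`: `x` is frequently divertable to
`[y]` if and only if `x` lies in the closure of `[y]` in the cylinder topology. -/
theorem stmt6 {k : ℕ} (hk : 1 ≤ k) (Λ : KGraph k) (hrf : Λ.RowFinite)
    (x y : InfPath Λ) :
    InfPath.FreqDiv x y ↔ x ∈ closure {z : InfPath Λ | InfPath.ShiftEquiv z y} := by
  constructor
  · intro hfd
    rw [mem_closure_iff]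
    intro U hU hxU
    obtain ⟨n, hball⟩ := open_key hU hxU
    obtain ⟨z0, hz0, hz0y⟩ := hfd n
    obtain ⟨w, hw1, hw2⟩ := concat x z0 n hz0
    refine ⟨w, hball w hw1, ?_⟩
    refine InfPath.ShiftEquiv.trans ?_ hz0y
    exact ⟨_, n, 0, rfl, by rw [hw2, InfPath.shift_zero]⟩
  · intro hcl n
    set a := x.seg 0 n zero_le with ha
    have hZopen : IsOpen {w : InfPath Λ | w.seg 0 (Λ.d a) zero_le = a} :=
      TopologicalSpace.isOpen_generateFrom_of_mem ⟨a, rfl⟩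
    have hdan : Λ.d a = n := by rw [ha, x.d_seg, tsub_zero]
    have hxZ : x ∈ {w : InfPath Λ | w.seg 0 (Λ.d a) zero_le = a} := by
      show x.seg 0 (Λ.d a) zero_le = a
      conv_rhs => rw [ha]
      exact x.seg_congr rfl hdan _
    obtain ⟨z, hzZ, hzy⟩ := mem_closure_iff.mp hcl _ hZopen hxZ
    have hz' : z.seg 0 n zero_le = x.seg 0 n zero_le := by
      rw [← ha, ← hzZ]
      exact (z.seg_congr rfl hdan _).symm
    refine ⟨z.shift n, ?_, InfPath.ShiftEquiv.trans (InfPath.shiftEquiv_shift z n) hzy⟩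
    show z.seg (0 + n) (0 + n) le_rfl = x.vert n
    calc z.seg (0 + n) (0 + n) le_rfl = z.seg n n le_rfl :=
        z.seg_congr (zero_add n) (zero_add n) _
    _ = Λ.src (z.seg 0 n zero_le) := (z.src_seg 0 n _).symm
    _ = Λ.src (x.seg 0 n zero_le) := by rw [hz']
    _ = x.vert n := x.src_seg 0 n _
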